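/- The composed best response map g(z) := B_1(B_2(z)) is a nondecreasing function from [0, q_1] to [0, q_1]: for all z₁, z₂ ∈ [0, q_1] with z₁ ≤ z₂, g(z₁) ≤ g(z₂); moreover g(z) ∈ [0, q_1] for every z ∈ [0, q_1]. -/

import Mathlib

/-- The cost-difference function `D_i(u, v) = C_i^f·(q_i − u) − C^b·(λ_i·u + μ_i·v) − ν·u·v`. -/
noncomputable def Dfun (Cf Cb nu lam mu q u v : ℝ) : ℝ :=
  Cf * (q - u) - Cb * (lam * u + mu * v) - nu * u * v

/-- `b` is the best response for the player with parameters `(Cf, lam, mu, q)` to the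
other flow `v`: a minimizer of `u ↦ D(u, v)²` over `[0, q]`. -/
def IsBestResponse (Cf Cb nu lam mu q v b : ℝ) : Prop :=
  b ∈ Set.Icc (0 : ℝ) q ∧
    ∀ u ∈ Set.Icc (0 : ℝ) q,
      (Dfun Cf Cb nu lam mu q b v) ^ 2 ≤ (Dfun Cf Cb nu lam mu q u v) ^ 2

lemma Dfun_affine (Cf Cb nu lam mu q u v : ℝ) :
    Dfun Cf Cb nu lam mu q u v = (Cf * q - Cb * mu * v) - (Cf + Cb * lam + nu * v) * u := by
  simp [Dfun]; ring

lemma formula_is_br (Cf Cb nu lam mu q v : ℝ)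
    (hCf : 0 < Cf) (hCb : 0 < Cb) (hnu : 0 < nu) (hlam : 0 < lam) (hmu : 0 < mu)
    (hq : 0 ≤ q) (hv : 0 ≤ v) :
    IsBestResponse Cf Cb nu lam mu q v
      (max 0 ((Cf * q - Cb * mu * v) / (Cf + Cb * lam + nu * v))) := by
  have hS : 0 < Cf + Cb * lam + nu * v := by positivity
  constructor
  · refine ⟨le_max_left _ _, max_le hq ?_⟩
    rw [div_le_iff₀ hS]
    nlinarith [mul_nonneg hq hv, mul_nonneg (mul_pos hCb hlam).le hq,
      mul_nonneg (mul_pos hCb hmu).le hv]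
  · intro u hu
    rcases le_or_gt (Cf * q - Cb * mu * v) 0 with hA0 | hA0
    · rw [max_eq_left (div_nonpos_of_nonpos_of_nonneg hA0 hS.le)]
      rw [Dfun_affine, Dfun_affine]
      have hSu : 0 ≤ (Cf + Cb * lam + nu * v) * u := mul_nonneg hS.le hu.1
      nlinarith [mul_nonneg hSu (neg_nonneg.2 hA0), sq_nonneg ((Cf + Cb * lam + nu * v) * u)]
    · rw [max_eq_right (le_of_lt (div_pos hA0 hS)), Dfun_affine]
      have h0 : (Cf * q - Cb * mu * v) -
          (Cf + Cb * lam + nu * v) * ((Cf * q - Cb * mu * v) / (Cf + Cb * lam + nu * v)) = 0 := by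
        field_simp
        ring
      rw [h0]
      simpa using sq_nonneg (Dfun Cf Cb nu lam mu q u v)

lemma br_unique (Cf Cb nu lam mu q v b b' : ℝ)
    (hCf : 0 < Cf) (hCb : 0 < Cb) (hnu : 0 < nu) (hlam : 0 < lam)
    (hv : 0 ≤ v)
    (hb : IsBestResponse Cf Cb nu lam mu q v b)
    (hb' : IsBestResponse Cf Cb nu lam mu q v b') : b = b' := by
  have hS : 0 < Cf + Cb * lam + nu * v := by positivity
  have h1 := hb.2 b' hb'.1
  have h2 := hb'.2 b hb.1
  have heq : (Dfun Cf Cb nu lam mu q b v) ^ 2 = (Dfun Cf Cb nu lam mu q b' v) ^ 2 :=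
    le_antisymm h1 h2
  rcases sq_eq_sq_iff_eq_or_eq_neg.mp heq with h | h
  · rw [Dfun_affine, Dfun_affine] at h
    have : (Cf + Cb * lam + nu * v) * b = (Cf + Cb * lam + nu * v) * b' := by linarith
    exact mul_left_cancel₀ hS.ne' this
  · have hmid : (b + b') / 2 ∈ Set.Icc (0 : ℝ) q :=
      ⟨by linarith [hb.1.1, hb'.1.1], by linarith [hb.1.2, hb'.1.2]⟩
    rw [Dfun_affine, Dfun_affine] at h
    have hDmid : Dfun Cf Cb nu lam mu q ((b + b') / 2) v = 0 := by
      rw [Dfun_affine]; linarith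
    have h0 := hb.2 _ hmid
    rw [hDmid] at h0
    have hx0 : Dfun Cf Cb nu lam mu q b v = 0 := by
      nlinarith [sq_nonneg (Dfun Cf Cb nu lam mu q b v)]
    rw [Dfun_affine] at hx0
    have : (Cf + Cb * lam + nu * v) * b = (Cf + Cb * lam + nu * v) * b' := by linarith
    exact mul_left_cancel₀ hS.ne' this

lemma br_eq_formula (Cf Cb nu lam mu q v b : ℝ)
    (hCf : 0 < Cf) (hCb : 0 < Cb) (hnu : 0 < nu) (hlam : 0 < lam) (hmu : 0 < mu)
    (hq : 0 ≤ q) (hv : 0 ≤ v)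
    (hb : IsBestResponse Cf Cb nu lam mu q v b) :
    b = max 0 ((Cf * q - Cb * mu * v) / (Cf + Cb * lam + nu * v)) :=
  br_unique Cf Cb nu lam mu q v b _ hCf hCb hnu hlam hv hb
    (formula_is_br Cf Cb nu lam mu q v hCf hCb hnu hlam hmu hq hv)

lemma formula_antitone (Cf Cb nu lam mu q v1 v2 : ℝ)
    (hCf : 0 < Cf) (hCb : 0 < Cb) (hnu : 0 < nu) (hlam : 0 < lam) (hmu : 0 < mu)
    (hq : 0 ≤ q) (hv1 : 0 ≤ v1) (hv12 : v1 ≤ v2) :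
    max 0 ((Cf * q - Cb * mu * v2) / (Cf + Cb * lam + nu * v2)) ≤
    max 0 ((Cf * q - Cb * mu * v1) / (Cf + Cb * lam + nu * v1)) := by
  have hS1 : 0 < Cf + Cb * lam + nu * v1 := by positivity
  have hS12 : Cf + Cb * lam + nu * v1 ≤ Cf + Cb * lam + nu * v2 := by
    nlinarith [mul_le_mul_of_nonneg_left hv12 hnu.le]
  have hS2 : 0 < Cf + Cb * lam + nu * v2 := lt_of_lt_of_le hS1 hS12
  rcases le_or_gt (Cf * q - Cb * mu * v2) 0 with h | h
  · rw [max_eq_left (div_nonpos_of_nonpos_of_nonneg h hS2.le)]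
    exact le_max_left _ _
  · have hA12 : Cf * q - Cb * mu * v2 ≤ Cf * q - Cb * mu * v1 := by
      nlinarith [mul_le_mul_of_nonneg_left hv12 (mul_pos hCb hmu).le]
    exact max_le_max le_rfl (div_le_div₀ (by linarith) hA12 hS1 hS12)

/-- The composed best response map `g(z) := B₁(B₂(z))` is a nondecreasing
function from `[0, q₁]` to `[0, q₁]`: for `z₁ ≤ z₂` in `[0, q₁]` we have `g(z₁) ≤ g(z₂)`,
and moreover `g(z) ∈ [0, q₁]` for every `z ∈ [0, q₁]`. Here `B₂(z)` is the unique
minimizer of `u ↦ D₂(u, z)²` over `[0, q₂]` and `B₁(w)` is the unique minimizer of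
`u ↦ D₁(u, w)²` over `[0, q₁]`. -/
theorem composed_best_response_monotone
    (C1f C2f Cb nu lam1 lam2 mu1 mu2 q1 q2 : ℝ)
    (hC1f : 0 < C1f) (hC2f : 0 < C2f) (hCb : 0 < Cb) (hnu : 0 < nu)
    (hlam1 : 0 < lam1) (hlam1' : lam1 ≤ 1) (hlam2 : 0 < lam2) (hlam2' : lam2 ≤ 1)
    (hmu1 : 0 < mu1) (hmu1' : mu1 ≤ 1) (hmu2 : 0 < mu2) (hmu2' : mu2 ≤ 1)
    (hq1 : 0 ≤ q1) (hq2 : 0 ≤ q2) (hq : q1 + q2 = 1) :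
    (∀ z1 ∈ Set.Icc (0 : ℝ) q1, ∀ z2 ∈ Set.Icc (0 : ℝ) q1, z1 ≤ z2 →
      ∀ w1 w2 b1 b2 : ℝ,
        IsBestResponse C2f Cb nu lam2 mu2 q2 z1 w1 →
        IsBestResponse C2f Cb nu lam2 mu2 q2 z2 w2 →
        IsBestResponse C1f Cb nu lam1 mu1 q1 w1 b1 →
        IsBestResponse C1f Cb nu lam1 mu1 q1 w2 b2 →
        b1 ≤ b2) ∧
    (∀ z ∈ Set.Icc (0 : ℝ) q1, ∀ w b : ℝ,
        IsBestResponse C2f Cb nu lam2 mu2 q2 z w →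
        IsBestResponse C1f Cb nu lam1 mu1 q1 w b →
        b ∈ Set.Icc (0 : ℝ) q1) := by
  have key : ∀ Cf lam mu q v b, 0 < Cf → 0 < lam → 0 < mu → 0 ≤ q → 0 ≤ v →
      IsBestResponse Cf Cb nu lam mu q v b →
      b = max 0 ((Cf * q - Cb * mu * v) / (Cf + Cb * lam + nu * v)) :=
    fun Cf lam mu q v b hCf hlam hmu hq hv hb =>
      br_eq_formula Cf Cb nu lam mu q v b hCf hCb hnu hlam hmu hq hv hb
  constructor
  · intro z1 hz1 z2 hz2 hz12 w1 w2 b1 b2 hw1 hw2 hb1 hb2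
    have hw1f := key C2f lam2 mu2 q2 z1 w1 hC2f hlam2 hmu2 hq2 hz1.1 hw1
    have hw2f := key C2f lam2 mu2 q2 z2 w2 hC2f hlam2 hmu2 hq2 hz2.1 hw2
    have hw21 : w2 ≤ w1 := by
      rw [hw1f, hw2f]
      exact formula_antitone C2f Cb nu lam2 mu2 q2 z1 z2 hC2f hCb hnu hlam2 hmu2 hq2 hz1.1 hz12
    have hb1f := key C1f lam1 mu1 q1 w1 b1 hC1f hlam1 hmu1 hq1 hw1.1.1 hb1
    have hb2f := key C1f lam1 mu1 q1 w2 b2 hC1f hlam1 hmu1 hq1 hw2.1.1 hb2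
    rw [hb1f, hb2f]
    exact formula_antitone C1f Cb nu lam1 mu1 q1 w2 w1 hC1f hCb hnu hlam1 hmu1 hq1 hw2.1.1 hw21
  · intro z hz w b hw hb
    exact hb.1
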